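/- Every finite family 𝔉 of frames in general position has a partition 𝒫 into layers of 𝔉; moreover, 𝒫 can be chosen so that it splits as 𝒫 = 𝒫₁ ∪ 𝒫₂ (with 𝒫₁, 𝒫₂ possibly empty) where any two distinct layers belonging to 𝒫₁ are mutually independent and any two distinct layers belonging to 𝒫₂ are mutually independent. -/

import Mathlib

open Set

/-- An axis-aligned rectangle `[l, r] × [b, t]` with `l < r` and `b < t`. -/
structure Rect where
  l : ℝ
  r : ℝ
  b : ℝ
  t : ℝ
  hlr : l < r
  hbt : b < t

noncomputable instance : DecidableEq Rect := Classical.decEq _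

/-- The filling rectangle, as a subset of the plane. -/
def Rect.toSet (R : Rect) : Set (ℝ × ℝ) := Set.Icc R.l R.r ×ˢ Set.Icc R.b R.t

/-- The frame: the boundary (topological frontier) of the filling rectangle. -/
def Rect.frame (R : Rect) : Set (ℝ × ℝ) := frontier R.toSet

/-- A family of frames is in general position. -/
def GenPos (𝔉 : Finset Rect) : Prop :=
  ∀ F ∈ 𝔉, ∀ F' ∈ 𝔉, F ≠ F' →
    [F.l, F.r, F'.l, F'.r].Pairwise (· ≠ ·) ∧
    [F.b, F.t, F'.b, F'.t].Pairwise (· ≠ ·)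

/-- The intersection graph of a family of frames. -/
def frameGraph (𝔉 : Finset Rect) : SimpleGraph {F : Rect // F ∈ 𝔉} where
  Adj F F' := F ≠ F' ∧ (F.1.frame ∩ F'.1.frame).Nonempty
  symm := by
    constructor
    intro a b h
    exact ⟨h.1.symm, by rw [Set.inter_comm]; exact h.2⟩
  loopless := by constructor; intro a h; exact h.1 rfl

/-- The intersection of frames `F` and `F'` is rightward-directed. -/
def RightDir (F F' : Rect) : Prop :=
  F.l < F'.l ∧ F'.l < F.r ∧ F.r < F'.r ∧ F.b < F'.b ∧ F'.b < F'.t ∧ F'.t < F.t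

/-- The intersection of frames `F` and `F'` is leftward-directed. -/
def LeftDir (F F' : Rect) : Prop :=
  F'.l < F.l ∧ F.l < F'.r ∧ F'.r < F.r ∧ F.b < F'.b ∧ F'.b < F'.t ∧ F'.t < F.t

/-- The intersection of frames `F` and `F'` is upward-directed. -/
def UpDir (F F' : Rect) : Prop :=
  F.b < F'.b ∧ F'.b < F.t ∧ F.t < F'.t ∧ F.l < F'.l ∧ F'.l < F'.r ∧ F'.r < F.r

/-- The intersection of frames `F` and `F'` is downward-directed. -/
def DownDir (F F' : Rect) : Prop :=
  F'.b < F.b ∧ F.b < F'.t ∧ F'.t < F.t ∧ F.l < F'.l ∧ F'.l < F'.r ∧ F'.r < F.r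

/-- Any two intersecting frames of the family satisfy `P` (in one of the two orders). -/
def IntersectingPairsSatisfy (𝔉 : Finset Rect) (P : Rect → Rect → Prop) : Prop :=
  ∀ F ∈ 𝔉, ∀ F' ∈ 𝔉, F ≠ F' → (F.frame ∩ F'.frame).Nonempty → P F F' ∨ P F' F

def IsRightwardDirected (𝔉 : Finset Rect) : Prop := IntersectingPairsSatisfy 𝔉 RightDir

/-- A directed family of frames. -/
def IsDirectedFamily (𝔉 : Finset Rect) : Prop :=
  IntersectingPairsSatisfy 𝔉 RightDir ∨ IntersectingPairsSatisfy 𝔉 LeftDir ∨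
    IntersectingPairsSatisfy 𝔉 UpDir ∨ IntersectingPairsSatisfy 𝔉 DownDir

/-- `F` is enclosed by `F'`. -/
def Enclosed (F F' : Rect) : Prop :=
  F'.l < F.l ∧ F.r < F'.r ∧ F'.b < F.b ∧ F.t < F'.t

/-- A clean family of frames. -/
def Clean (𝔉 : Finset Rect) : Prop :=
  ¬ ∃ F₁ ∈ 𝔉, ∃ F₂ ∈ 𝔉, ∃ F₃ ∈ 𝔉, F₁ ≠ F₂ ∧
    (Rect.frame F₁ ∩ Rect.frame F₂).Nonempty ∧ Enclosed F₃ F₁ ∧ Enclosed F₃ F₂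

/-- The overlap graph of a family of rectangles: two rectangles are adjacent if they
intersect but neither is a subset of the other. -/
def overlapGraph (𝔉 : Finset Rect) : SimpleGraph {R : Rect // R ∈ 𝔉} where
  Adj R S := (R.1.toSet ∩ S.1.toSet).Nonempty ∧ ¬ R.1.toSet ⊆ S.1.toSet ∧ ¬ S.1.toSet ⊆ R.1.toSet
  symm := by
    constructor
    intro a b h
    exact ⟨by rw [Set.inter_comm]; exact h.1, h.2.2, h.2.1⟩
  loopless := by constructor; intro a h; exact h.2.1 subset_rfl

/-- `L` is a layer of the family `𝔉` of frames. -/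
def IsLayer (𝔉 L : Finset Rect) : Prop :=
  L ⊆ 𝔉 ∧ (L.card = 1 ∨ ∀ F ∈ L, ∃ F' ∈ 𝔉, F' ∉ L ∧
    ¬ (F'.frame ⊆ ⋃ F'' ∈ L, Rect.toSet F'') ∧ (F.frame ∩ F'.frame).Nonempty)

/-- `L` is an `m`-fold layer of `𝔉`. -/
def IsMFoldLayer : ℕ → Finset Rect → Finset Rect → Prop
  | 0, 𝔉, L => L = 𝔉
  | m + 1, 𝔉, L => ∃ L', IsMFoldLayer m 𝔉 L' ∧ IsLayer L' L

/-- Two families of frames are mutually independent: no frame of one intersects a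
frame of the other. -/
def MutuallyIndependent (L L' : Finset Rect) : Prop :=
  ∀ F ∈ L, ∀ F' ∈ L', Rect.frame F ∩ Rect.frame F' = ∅


section StmtSixteenProof

lemma Rect.isClosed_toSet (R : Rect) : IsClosed R.toSet := isClosed_Icc.prod isClosed_Icc

lemma Rect.interior_toSet (R : Rect) : interior R.toSet = Ioo R.l R.r ×ˢ Ioo R.b R.t := by
  rw [Rect.toSet, interior_prod_eq, interior_Icc, interior_Icc]

lemma Rect.frame_eq (R : Rect) : R.frame = R.toSet \ (Ioo R.l R.r ×ˢ Ioo R.b R.t) := by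
  rw [Rect.frame, frontier, R.isClosed_toSet.closure_eq, R.interior_toSet]

lemma Rect.frame_subset (R : Rect) : R.frame ⊆ R.toSet := by
  rw [R.frame_eq]; exact diff_subset

lemma Rect.corner_lb_mem (R : Rect) : ((R.l, R.b) : ℝ × ℝ) ∈ R.frame := by
  rw [R.frame_eq]
  constructor
  · exact ⟨⟨le_refl _, R.hlr.le⟩, ⟨le_refl _, R.hbt.le⟩⟩
  · rintro ⟨⟨h1, -⟩, -⟩; exact lt_irrefl _ h1

lemma Rect.corner_rt_mem (R : Rect) : ((R.r, R.t) : ℝ × ℝ) ∈ R.frame := by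
  rw [R.frame_eq]
  constructor
  · exact ⟨⟨R.hlr.le, le_refl _⟩, ⟨R.hbt.le, le_refl _⟩⟩
  · rintro ⟨⟨-, h1⟩, -⟩; exact lt_irrefl _ h1

lemma Rect.frame_eq_edges (R : Rect) :
    R.frame = (Icc R.l R.l ×ˢ Icc R.b R.t) ∪ (Icc R.r R.r ×ˢ Icc R.b R.t) ∪
      (Icc R.l R.r ×ˢ Icc R.b R.b) ∪ (Icc R.l R.r ×ˢ Icc R.t R.t) := by
  rw [R.frame_eq]
  ext ⟨x, y⟩
  simp only [Rect.toSet, mem_diff, mem_prod, mem_Icc, mem_Ioo, mem_union, Icc_self,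
    mem_singleton_iff]
  constructor
  · rintro ⟨⟨⟨h1, h2⟩, h3, h4⟩, h5⟩
    by_cases e1 : x = R.l
    · exact Or.inl (Or.inl (Or.inl ⟨e1, h3, h4⟩))
    by_cases e2 : x = R.r
    · exact Or.inl (Or.inl (Or.inr ⟨e2, h3, h4⟩))
    by_cases e3 : y = R.b
    · exact Or.inl (Or.inr ⟨⟨h1, h2⟩, e3⟩)
    by_cases e4 : y = R.t
    · exact Or.inr ⟨⟨h1, h2⟩, e4⟩
    exact absurd ⟨⟨h1.lt_of_ne (Ne.symm e1), h2.lt_of_ne e2⟩,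
      h3.lt_of_ne (Ne.symm e3), h4.lt_of_ne e4⟩ h5
  · rintro (((⟨rfl, h3, h4⟩ | ⟨rfl, h3, h4⟩) | ⟨⟨h1, h2⟩, rfl⟩) | ⟨⟨h1, h2⟩, rfl⟩)
    · exact ⟨⟨⟨le_refl _, R.hlr.le⟩, h3, h4⟩, by rintro ⟨⟨p1, -⟩, -⟩; exact lt_irrefl _ p1⟩
    · exact ⟨⟨⟨R.hlr.le, le_refl _⟩, h3, h4⟩, by rintro ⟨⟨-, p2⟩, -⟩; exact lt_irrefl _ p2⟩
    · exact ⟨⟨⟨h1, h2⟩, le_refl _, R.hbt.le⟩, by rintro ⟨-, p3, -⟩; exact lt_irrefl _ p3⟩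
    · exact ⟨⟨⟨h1, h2⟩, R.hbt.le, le_refl _⟩, by rintro ⟨-, -, p4⟩; exact lt_irrefl _ p4⟩

lemma Rect.frame_preconnected (R : Rect) : IsPreconnected R.frame := by
  rw [R.frame_eq_edges]
  have cv : ∀ a b c d : ℝ, IsPreconnected ((Icc a b ×ˢ Icc c d : Set (ℝ × ℝ))) :=
    fun a b c d => ((convex_Icc a b).prod (convex_Icc c d)).isPreconnected
  have h1 : IsPreconnected ((Icc R.l R.l ×ˢ Icc R.b R.t) ∪ (Icc R.l R.r ×ˢ Icc R.b R.b) : Set (ℝ×ℝ)) := by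
    apply IsPreconnected.union (R.l, R.b) _ _ (cv _ _ _ _) (cv _ _ _ _)
    · exact ⟨⟨le_refl _, le_refl _⟩, le_refl _, R.hbt.le⟩
    · exact ⟨⟨le_refl _, R.hlr.le⟩, le_refl _, le_refl _⟩
  have h2 : IsPreconnected (((Icc R.l R.l ×ˢ Icc R.b R.t) ∪ (Icc R.l R.r ×ˢ Icc R.b R.b)) ∪ (Icc R.r R.r ×ˢ Icc R.b R.t) : Set (ℝ×ℝ)) := by
    apply IsPreconnected.union (R.r, R.b) _ _ h1 (cv _ _ _ _)
    · exact Or.inr ⟨⟨R.hlr.le, le_refl _⟩, le_refl _, le_refl _⟩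
    · exact ⟨⟨le_refl _, le_refl _⟩, le_refl _, R.hbt.le⟩
  have h3 : IsPreconnected ((((Icc R.l R.l ×ˢ Icc R.b R.t) ∪ (Icc R.l R.r ×ˢ Icc R.b R.b)) ∪ (Icc R.r R.r ×ˢ Icc R.b R.t)) ∪ (Icc R.l R.r ×ˢ Icc R.t R.t) : Set (ℝ×ℝ)) := by
    apply IsPreconnected.union (R.l, R.t) _ _ h2 (cv _ _ _ _)
    · exact Or.inl (Or.inl ⟨⟨le_refl _, le_refl _⟩, R.hbt.le, le_refl _⟩)
    · exact ⟨⟨le_refl _, R.hlr.le⟩, le_refl _, le_refl _⟩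
  have heq : ((((Icc R.l R.l ×ˢ Icc R.b R.t) ∪ (Icc R.l R.r ×ˢ Icc R.b R.b)) ∪ (Icc R.r R.r ×ˢ Icc R.b R.t)) ∪ (Icc R.l R.r ×ˢ Icc R.t R.t) : Set (ℝ×ℝ))
      = (Icc R.l R.l ×ˢ Icc R.b R.t) ∪ (Icc R.r R.r ×ˢ Icc R.b R.t) ∪ (Icc R.l R.r ×ˢ Icc R.b R.b) ∪ (Icc R.l R.r ×ˢ Icc R.t R.t) := by
    ac_rfl
  rwa [heq] at h3

/-- Key geometric fact: if the frames of `w` and `y` are disjoint but some point of the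
frame of `w` lies in the filled rectangle of `y`, then `w` is enclosed in `y`. -/
lemma enclosed_of_frames_disjoint {w y : Rect} (hd : w.frame ∩ y.frame = ∅)
    {q : ℝ × ℝ} (hqw : q ∈ w.frame) (hqy : q ∈ y.toSet) : Enclosed w y := by
  have hqint : q ∈ interior y.toSet := by
    rw [y.interior_toSet]
    have hnf : q ∉ y.frame := fun hf => (eq_empty_iff_forall_notMem.mp hd q) ⟨hqw, hf⟩
    rw [y.frame_eq] at hnf
    by_contra hno
    exact hnf ⟨hqy, hno⟩
  -- frame w ⊆ interior (y.toSet) ∪ (y.toSet)ᶜ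
  have hcover : w.frame ⊆ interior y.toSet ∪ (y.toSet)ᶜ := by
    intro p hp
    by_cases hin : p ∈ y.toSet
    · left
      have hnf : p ∉ y.frame := fun hf => (eq_empty_iff_forall_notMem.mp hd p) ⟨hp, hf⟩
      rw [y.frame_eq] at hnf
      rw [y.interior_toSet]
      by_contra hno
      exact hnf ⟨hin, hno⟩
    · exact Or.inr hin
  have hsub : w.frame ⊆ interior y.toSet := by
    by_contra hns
    obtain ⟨p, hp, hpn⟩ := not_subset.mp hns
    have hpc : p ∈ (y.toSet)ᶜ := (hcover hp).resolve_left hpn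
    have := w.frame_preconnected (interior y.toSet) ((y.toSet)ᶜ) isOpen_interior
      (y.isClosed_toSet.isOpen_compl) hcover ⟨q, hqw, hqint⟩ ⟨p, hp, hpc⟩
    obtain ⟨z, -, hz1, hz2⟩ := this
    exact hz2 (interior_subset hz1)
  have c1 := hsub w.corner_lb_mem
  have c2 := hsub w.corner_rt_mem
  rw [y.interior_toSet] at c1 c2
  obtain ⟨⟨a1, a2⟩, a3, a4⟩ := c1
  obtain ⟨⟨b1, b2⟩, b3, b4⟩ := c2
  exact ⟨a1, b2, a3, b4⟩

lemma Enclosed.toSet_subset {s y : Rect} (h : Enclosed s y) : s.toSet ⊆ y.toSet := by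
  rintro ⟨x, z⟩ ⟨⟨h1, h2⟩, h3, h4⟩
  exact ⟨⟨le_trans h.1.le h1, le_trans h2 h.2.1.le⟩, le_trans h.2.2.1.le h3, le_trans h4 h.2.2.2.le⟩


open scoped Classical

/-- BFS onion: `(onion 𝔊 M i).1` is the `i`-th BFS layer from `M` inside `𝔊`;
`(onion 𝔊 M i).2` is the union of layers `0..i`. -/
noncomputable def onion (𝔊 : Finset Rect) (M : Rect) : ℕ → Finset Rect × Finset Rect
  | 0 => ({M}, {M})
  | (i+1) =>
      (((𝔊 \ (onion 𝔊 M i).2).filter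
          (fun F => ∃ G ∈ (onion 𝔊 M i).1, (Rect.frame F ∩ Rect.frame G).Nonempty)),
       (onion 𝔊 M i).2 ∪ ((𝔊 \ (onion 𝔊 M i).2).filter
          (fun F => ∃ G ∈ (onion 𝔊 M i).1, (Rect.frame F ∩ Rect.frame G).Nonempty)))

variable (𝔊 : Finset Rect) (M : Rect)

noncomputable def oT (i : ℕ) : Finset Rect := (onion 𝔊 M i).1
noncomputable def oU (i : ℕ) : Finset Rect := (onion 𝔊 M i).2

lemma oT_zero : oT 𝔊 M 0 = {M} := rfl
lemma oU_zero : oU 𝔊 M 0 = {M} := rfl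

lemma oT_succ (i : ℕ) : oT 𝔊 M (i+1) =
    (𝔊 \ oU 𝔊 M i).filter
      (fun F => ∃ G ∈ oT 𝔊 M i, (Rect.frame F ∩ Rect.frame G).Nonempty) := by
  simp only [oT, oU, onion]
  rfl

lemma oU_succ (i : ℕ) : oU 𝔊 M (i+1) = oU 𝔊 M i ∪ oT 𝔊 M (i+1) := by
  simp only [oT, oU, onion]

lemma oT_subset_oU (i : ℕ) : oT 𝔊 M i ⊆ oU 𝔊 M i := by
  cases i with
  | zero => exact subset_rfl
  | succ n => rw [oU_succ]; exact Finset.subset_union_right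

lemma oU_mono : Monotone (oU 𝔊 M) := by
  apply monotone_nat_of_le_succ
  intro i
  rw [oU_succ]
  exact Finset.subset_union_left

lemma oT_succ_disj (i : ℕ) : Disjoint (oT 𝔊 M (i+1)) (oU 𝔊 M i) := by
  rw [oT_succ]
  exact Finset.disjoint_left.mpr fun x hx hx' =>
    (Finset.mem_sdiff.mp (Finset.mem_of_mem_filter _ hx)).2 hx'

lemma oT_disj {i j : ℕ} (h : i < j) : Disjoint (oT 𝔊 M i) (oT 𝔊 M j) := by
  obtain ⟨k, rfl⟩ : ∃ k, j = k + 1 := ⟨j - 1, by omega⟩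
  have h1 : oT 𝔊 M i ⊆ oU 𝔊 M k := (oT_subset_oU 𝔊 M i).trans (oU_mono 𝔊 M (by omega))
  exact (Finset.disjoint_of_subset_right h1 (oT_succ_disj 𝔊 M k)).symm

lemma oT_subset_G (hM : M ∈ 𝔊) (i : ℕ) : oT 𝔊 M i ⊆ 𝔊 := by
  cases i with
  | zero => rw [oT_zero]; simpa using hM
  | succ n =>
      rw [oT_succ]
      exact (Finset.filter_subset _ _).trans (Finset.sdiff_subset)

lemma oU_subset_G (hM : M ∈ 𝔊) (i : ℕ) : oU 𝔊 M i ⊆ 𝔊 := by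
  induction i with
  | zero => rw [oU_zero]; simpa using hM
  | succ n ih => rw [oU_succ]; exact Finset.union_subset ih (oT_subset_G 𝔊 M hM _)

lemma oT_cross {i : ℕ} {F : Rect} (hF : F ∈ oT 𝔊 M (i+1)) :
    ∃ G ∈ oT 𝔊 M i, (Rect.frame F ∩ Rect.frame G).Nonempty := by
  rw [oT_succ] at hF
  classical
  exact (Finset.mem_filter.mp hF).2

lemma oT_step {i : ℕ} {F : Rect} (hF : F ∈ 𝔊) (hFU : F ∉ oU 𝔊 M i)
    (h : ∃ G ∈ oT 𝔊 M i, (Rect.frame F ∩ Rect.frame G).Nonempty) : F ∈ oT 𝔊 M (i+1) := by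
  rw [oT_succ]
  classical
  exact Finset.mem_filter.mpr ⟨Finset.mem_sdiff.mpr ⟨hF, hFU⟩, h⟩

lemma no_cross_far {i j : ℕ} (hij : i + 2 ≤ j) {a b : Rect}
    (ha : a ∈ oT 𝔊 M i) (hb : b ∈ oT 𝔊 M j) : Rect.frame a ∩ Rect.frame b = ∅ := by
  by_contra hne
  have hnon : (Rect.frame b ∩ Rect.frame a).Nonempty := by
    rw [Set.inter_comm]
    exact Set.nonempty_iff_ne_empty.mpr hne
  obtain ⟨k, rfl⟩ : ∃ k, j = k + 1 := ⟨j - 1, by omega⟩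
  rw [oT_succ] at hb
  classical
  obtain ⟨hbG, -⟩ := Finset.mem_filter.mp hb
  obtain ⟨hbmem, hbU⟩ := Finset.mem_sdiff.mp hbG
  have hbUi : b ∉ oU 𝔊 M i := fun hx => hbU (oU_mono 𝔊 M (by omega) hx)
  have : b ∈ oT 𝔊 M (i+1) := oT_step 𝔊 M hbmem hbUi ⟨a, ha, hnon⟩
  have : b ∈ oU 𝔊 M k := oU_mono 𝔊 M (by omega) (oT_subset_oU 𝔊 M (i+1) this)
  exact hbU this



variable {𝔉 : Finset Rect}

lemma gp_r_lt (hgp : GenPos 𝔉) (h𝔊 : 𝔊 ⊆ 𝔉) (hM : M ∈ 𝔊)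
    (hmaxle : ∀ G ∈ 𝔊, G.r ≤ M.r) {G : Rect} (hG : G ∈ 𝔊) (hne : G ≠ M) : G.r < M.r := by
  have h := (hgp G (h𝔊 hG) M (h𝔊 hM) hne).1
  simp only [List.pairwise_cons, List.mem_cons, List.mem_singleton, List.not_mem_nil,
    List.Pairwise.nil, forall_eq_or_imp, forall_eq] at h
  exact lt_of_le_of_ne (hmaxle G hG) (by tauto)

lemma mem_oT_ne_M {j : ℕ} (hj : 0 < j) {y : Rect} (hy : y ∈ oT 𝔊 M j) : y ≠ M := by
  intro h
  have hM0 : M ∈ oT 𝔊 M 0 := by rw [oT_zero]; simp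
  rw [h] at hy
  exact (Finset.disjoint_left.mp (oT_disj 𝔊 M hj) hM0) hy

lemma no_encl (hgp : GenPos 𝔉) (h𝔊 : 𝔊 ⊆ 𝔉) (hM : M ∈ 𝔊)
    (hmaxle : ∀ G ∈ 𝔊, G.r ≤ M.r) :
    ∀ i j, i + 2 ≤ j → ∀ s ∈ oT 𝔊 M i, ∀ y ∈ oT 𝔊 M j, ¬ Enclosed s y := by
  intro i
  induction i with
  | zero =>
      intro j hj s hs y hy henc
      rw [oT_zero] at hs
      simp only [Finset.mem_singleton] at hs
      rw [hs] at henc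
      have hyne : y ≠ M := mem_oT_ne_M 𝔊 M (by omega) hy
      have hlt : y.r < M.r :=
        gp_r_lt 𝔊 M hgp h𝔊 hM hmaxle (oT_subset_G 𝔊 M hM j hy) hyne
      exact absurd henc.2.1 (not_lt.mpr hlt.le)
  | succ i ih =>
      intro j hj s hs y hy henc
      obtain ⟨w, hw, q, hqs, hqw⟩ := oT_cross 𝔊 M hs
      have hqy : q ∈ y.toSet := henc.toSet_subset (s.frame_subset hqs)
      have hd : Rect.frame w ∩ Rect.frame y = ∅ := no_cross_far 𝔊 M (by omega) hw hy
      exact ih j (by omega) w hw y hy (enclosed_of_frames_disjoint hd hqw hqy)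

lemma notsubset_of_escape {F' : Rect} {L : Finset Rect} {q : ℝ × ℝ} (hq : q ∈ F'.frame)
    (h : ∀ y ∈ L, q ∉ y.toSet) : ¬ (F'.frame ⊆ ⋃ F'' ∈ L, Rect.toSet F'') := by
  intro hsub
  have := hsub hq
  simp only [Set.mem_iUnion, exists_prop, Finset.mem_coe] at this
  obtain ⟨y, hy, hqy⟩ := this
  exact h y hy hqy

lemma M_external (hgp : GenPos 𝔉) (h𝔊 : 𝔊 ⊆ 𝔉) (hM : M ∈ 𝔊)
    (hmaxle : ∀ G ∈ 𝔊, G.r ≤ M.r) :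
    ¬ (M.frame ⊆ ⋃ F'' ∈ oT 𝔊 M 1, Rect.toSet F'') := by
  apply notsubset_of_escape M.corner_rt_mem
  intro y hy hmem
  have hyne : y ≠ M := mem_oT_ne_M 𝔊 M (by omega) hy
  have hlt : y.r < M.r :=
    gp_r_lt 𝔊 M hgp h𝔊 hM hmaxle (oT_subset_G 𝔊 M hM 1 hy) hyne
  have hle : M.r ≤ y.r := hmem.1.2
  linarith

lemma witness_external (hgp : GenPos 𝔉) (h𝔊 : 𝔊 ⊆ 𝔉) (hM : M ∈ 𝔊)
    (hmaxle : ∀ G ∈ 𝔊, G.r ≤ M.r) (i : ℕ) {u : Rect} (hu : u ∈ oT 𝔊 M (i+1)) :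
    ¬ (u.frame ⊆ ⋃ F'' ∈ oT 𝔊 M (i+2), Rect.toSet F'') := by
  obtain ⟨s, hs, q, hqu, hqs⟩ := oT_cross 𝔊 M hu
  apply notsubset_of_escape hqu
  intro y hy hqy
  have hd : Rect.frame s ∩ Rect.frame y = ∅ := no_cross_far 𝔊 M (by omega) hs hy
  exact no_encl 𝔊 M hgp h𝔊 hM hmaxle i (i+2) (by omega) s hs y hy
    (enclosed_of_frames_disjoint hd hqs hqy)

lemma isLayer_oT (hgp : GenPos 𝔉) (h𝔊 : 𝔊 ⊆ 𝔉) (hM : M ∈ 𝔊)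
    (hmaxle : ∀ G ∈ 𝔊, G.r ≤ M.r) (i : ℕ) : IsLayer 𝔉 (oT 𝔊 M i) := by
  refine ⟨(oT_subset_G 𝔊 M hM i).trans h𝔊, ?_⟩
  match i with
  | 0 => left; rw [oT_zero]; simp
  | 1 =>
      right; intro F hF
      refine ⟨M, h𝔊 hM, ?_, M_external 𝔊 M hgp h𝔊 hM hmaxle, ?_⟩
      · intro hMG
        exact mem_oT_ne_M 𝔊 M (by omega) hMG rfl
      · obtain ⟨G, hG, hq⟩ := oT_cross 𝔊 M hF
        rw [oT_zero] at hG
        simp only [Finset.mem_singleton] at hG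
        rw [← hG]
        exact hq
  | (j+2) =>
      right; intro F hF
      obtain ⟨u, hu, hq⟩ := oT_cross 𝔊 M hF
      refine ⟨u, h𝔊 (oT_subset_G 𝔊 M hM _ hu), ?_,
        witness_external 𝔊 M hgp h𝔊 hM hmaxle j hu, hq⟩
      intro hu2
      exact (Finset.disjoint_left.mp (oT_disj 𝔊 M (by omega : j+1 < j+2)) hu) hu2

lemma oU_card (i : ℕ) (h : ∀ j ≤ i, (oT 𝔊 M j).Nonempty) : i + 1 ≤ (oU 𝔊 M i).card := by
  induction i with
  | zero => rw [oU_zero]; simp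
  | succ n ih =>
      rw [oU_succ, Finset.card_union_of_disjoint (oT_succ_disj 𝔊 M n).symm]
      have h1 := ih (fun j hj => h j (by omega))
      have h2 : 1 ≤ (oT 𝔊 M (n+1)).card := Finset.card_pos.mpr (h (n+1) le_rfl)
      omega

lemma exists_empty_oT (hM : M ∈ 𝔊) : ∃ i, oT 𝔊 M i = ∅ := by
  by_contra h
  push_neg at h
  have h1 : 𝔊.card + 1 ≤ (oU 𝔊 M 𝔊.card).card :=
    oU_card 𝔊 M _ (fun j _ => h j)
  have h2 : (oU 𝔊 M 𝔊.card).card ≤ 𝔊.card := Finset.card_le_card (oU_subset_G 𝔊 M hM _)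
  omega

lemma oU_eq_biUnion (i : ℕ) : oU 𝔊 M i = (Finset.range (i+1)).biUnion (oT 𝔊 M) := by
  induction i with
  | zero => rw [oU_zero]; simp [oT_zero]
  | succ n ih =>
      ext x
      simp only [oU_succ, ih, Finset.mem_union, Finset.mem_biUnion, Finset.mem_range]
      constructor
      · rintro (⟨i, hi, h⟩ | h)
        · exact ⟨i, by omega, h⟩
        · exact ⟨n+1, by omega, h⟩
      · rintro ⟨i, hi, h⟩
        rcases Nat.lt_or_ge i (n+1) with h' | h'
        · exact Or.inl ⟨i, h', h⟩
        · have hi2 : i = n+1 := by omega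
          rw [hi2] at h
          exact Or.inr h

lemma rest_no_cross (hM : M ∈ 𝔊) {k : ℕ} (hk : oT 𝔊 M k = ∅) {x a : Rect}
    (hx : x ∈ 𝔊 \ oU 𝔊 M k) (ha : a ∈ oU 𝔊 M k) :
    Rect.frame a ∩ Rect.frame x = ∅ := by
  rw [oU_eq_biUnion] at ha
  obtain ⟨i, hi, hai⟩ := Finset.mem_biUnion.mp ha
  rw [Finset.mem_range] at hi
  have hik : i < k := by
    rcases Nat.lt_or_ge i k with h | h
    · exact h
    · have : i = k := by omega
      subst this
      rw [hk] at hai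
      exact absurd hai (Finset.notMem_empty _)
  by_contra hne
  have hnon : (Rect.frame x ∩ Rect.frame a).Nonempty := by
    rw [Set.inter_comm]
    exact Set.nonempty_iff_ne_empty.mpr hne
  obtain ⟨hxG, hxU⟩ := Finset.mem_sdiff.mp hx
  have hxUi : x ∉ oU 𝔊 M i := fun h => hxU (oU_mono 𝔊 M (by omega) h)
  have hmem : x ∈ oT 𝔊 M (i+1) := oT_step 𝔊 M hxG hxUi ⟨a, hai, hnon⟩
  exact hxU (oU_mono 𝔊 M (by omega) (oT_subset_oU 𝔊 M (i+1) hmem))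


end StmtSixteenProof

section Assembly

/-- The packaged conclusion for a subfamily `𝔊` of `𝔉`. -/
def GoodPart (𝔉 𝔊 : Finset Rect) (P₁ P₂ : Finset (Finset Rect)) : Prop :=
  Disjoint P₁ P₂ ∧
  (∀ L ∈ P₁ ∪ P₂, L.Nonempty ∧ IsLayer 𝔉 L) ∧
  (∀ L ∈ P₁ ∪ P₂, ∀ L' ∈ P₁ ∪ P₂, L ≠ L' → Disjoint L L') ∧
  (P₁ ∪ P₂).biUnion id = 𝔊 ∧
  (∀ L ∈ P₁, ∀ L' ∈ P₁, L ≠ L' → MutuallyIndependent L L') ∧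
  (∀ L ∈ P₂, ∀ L' ∈ P₂, L ≠ L' → MutuallyIndependent L L')

variable {𝔉 : Finset Rect}

lemma good_empty : GoodPart 𝔉 ∅ ∅ ∅ := by
  refine ⟨?_, ?_, ?_, ?_, ?_, ?_⟩ <;> simp [GoodPart]

lemma good_union {A B : Finset Rect} {PA1 PA2 PB1 PB2 : Finset (Finset Rect)}
    (hA : GoodPart 𝔉 A PA1 PA2) (hB : GoodPart 𝔉 B PB1 PB2)
    (hdisj : Disjoint A B)
    (hind : ∀ a ∈ A, ∀ b ∈ B, Rect.frame a ∩ Rect.frame b = ∅) :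
    GoodPart 𝔉 (A ∪ B) (PA1 ∪ PB1) (PA2 ∪ PB2) := by
  obtain ⟨hA1, hA2, hA3, hA4, hA5, hA6⟩ := hA
  obtain ⟨hB1, hB2, hB3, hB4, hB5, hB6⟩ := hB
  have hsubA : ∀ L ∈ PA1 ∪ PA2, L ⊆ A := by
    intro L hL
    rw [← hA4]
    exact Finset.subset_biUnion_of_mem id hL
  have hsubB : ∀ L ∈ PB1 ∪ PB2, L ⊆ B := by
    intro L hL
    rw [← hB4]
    exact Finset.subset_biUnion_of_mem id hL
  have hneAB : ∀ L ∈ PA1 ∪ PA2, ∀ L' ∈ PB1 ∪ PB2, L ≠ L' := by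
    intro L hL L' hL' he
    obtain ⟨x, hx⟩ := (hA2 L hL).1
    exact Finset.disjoint_left.mp hdisj (hsubA L hL hx) (hsubB L' hL' (he ▸ hx))
  have hdAB : ∀ L ∈ PA1 ∪ PA2, ∀ L' ∈ PB1 ∪ PB2, Disjoint L L' := by
    intro L hL L' hL'
    rw [Finset.disjoint_left]
    intro x hx hx'
    exact Finset.disjoint_left.mp hdisj (hsubA L hL hx) (hsubB L' hL' hx')
  have hiAB : ∀ L ∈ PA1 ∪ PA2, ∀ L' ∈ PB1 ∪ PB2, MutuallyIndependent L L' := by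
    intro L hL L' hL' F hF F' hF'
    exact hind F (hsubA L hL hF) F' (hsubB L' hL' hF')
  have hiBA : ∀ L ∈ PB1 ∪ PB2, ∀ L' ∈ PA1 ∪ PA2, MutuallyIndependent L L' := by
    intro L hL L' hL' F hF F' hF'
    rw [Set.inter_comm]
    exact hind F' (hsubA L' hL' hF') F (hsubB L hL hF)
  refine ⟨?_, ?_, ?_, ?_, ?_, ?_⟩
  · rw [Finset.disjoint_left]
    intro L hL hL'
    rcases Finset.mem_union.mp hL with h1 | h1 <;> rcases Finset.mem_union.mp hL' with h2 | h2
    · exact Finset.disjoint_left.mp hA1 h1 h2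
    · exact hneAB L (Finset.mem_union_left _ h1) L (Finset.mem_union_right _ h2) rfl
    · exact hneAB L (Finset.mem_union_right _ h2) L (Finset.mem_union_left _ h1) rfl
    · exact Finset.disjoint_left.mp hB1 h1 h2
  · intro L hL
    have : L ∈ PA1 ∪ PA2 ∨ L ∈ PB1 ∪ PB2 := by
      simp only [Finset.mem_union] at hL ⊢
      tauto
    rcases this with h | h
    · exact hA2 L h
    · exact hB2 L h
  · intro L hL L' hL' hne
    have h1 : L ∈ PA1 ∪ PA2 ∨ L ∈ PB1 ∪ PB2 := by
      simp only [Finset.mem_union] at hL ⊢; tauto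
    have h2 : L' ∈ PA1 ∪ PA2 ∨ L' ∈ PB1 ∪ PB2 := by
      simp only [Finset.mem_union] at hL' ⊢; tauto
    rcases h1 with h1 | h1 <;> rcases h2 with h2 | h2
    · exact hA3 L h1 L' h2 hne
    · exact hdAB L h1 L' h2
    · exact (hdAB L' h2 L h1).symm
    · exact hB3 L h1 L' h2 hne
  · have heq : (PA1 ∪ PB1) ∪ (PA2 ∪ PB2) = (PA1 ∪ PA2) ∪ (PB1 ∪ PB2) := by
      ext x
      simp only [Finset.mem_union]
      tauto
    rw [heq]
    have hbu : ((PA1 ∪ PA2) ∪ (PB1 ∪ PB2)).biUnion id = (PA1 ∪ PA2).biUnion id ∪ (PB1 ∪ PB2).biUnion id := by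
      ext x
      simp only [Finset.mem_biUnion, Finset.mem_union, id]
      constructor
      · rintro ⟨L, (h | h), hx⟩
        · exact Or.inl ⟨L, h, hx⟩
        · exact Or.inr ⟨L, h, hx⟩
      · rintro (⟨L, h, hx⟩ | ⟨L, h, hx⟩)
        · exact ⟨L, Or.inl h, hx⟩
        · exact ⟨L, Or.inr h, hx⟩
    rw [hbu, hA4, hB4]
  · intro L hL L' hL' hne
    rcases Finset.mem_union.mp hL with h1 | h1 <;> rcases Finset.mem_union.mp hL' with h2 | h2
    · exact hA5 L h1 L' h2 hne
    · exact hiAB L (Finset.mem_union_left _ h1) L' (Finset.mem_union_left _ h2)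
    · exact hiBA L (Finset.mem_union_left _ h1) L' (Finset.mem_union_left _ h2)
    · exact hB5 L h1 L' h2 hne
  · intro L hL L' hL' hne
    rcases Finset.mem_union.mp hL with h1 | h1 <;> rcases Finset.mem_union.mp hL' with h2 | h2
    · exact hA6 L h1 L' h2 hne
    · exact hiAB L (Finset.mem_union_right _ h1) L' (Finset.mem_union_right _ h2)
    · exact hiBA L (Finset.mem_union_right _ h1) L' (Finset.mem_union_right _ h2)
    · exact hB6 L h1 L' h2 hne

open scoped Classical

lemma onion_good {𝔊 : Finset Rect} {M : Rect} (hgp : GenPos 𝔉) (h𝔊 : 𝔊 ⊆ 𝔉) (hM : M ∈ 𝔊)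
    (hmaxle : ∀ G ∈ 𝔊, G.r ≤ M.r) {k : ℕ} (hk : oT 𝔊 M k = ∅)
    (hne : ∀ j < k, (oT 𝔊 M j).Nonempty) :
    GoodPart 𝔉 (oU 𝔊 M k)
      (((Finset.range k).filter (fun i => Even i)).image (oT 𝔊 M))
      (((Finset.range k).filter (fun i => ¬ Even i)).image (oT 𝔊 M)) := by
  have hmem1 : ∀ {L}, L ∈ ((Finset.range k).filter (fun i => Even i)).image (oT 𝔊 M) →
      ∃ i, i < k ∧ Even i ∧ L = oT 𝔊 M i := by
    intro L hL
    obtain ⟨i, hi, rfl⟩ := Finset.mem_image.mp hL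
    obtain ⟨hir, hie⟩ := Finset.mem_filter.mp hi
    exact ⟨i, Finset.mem_range.mp hir, hie, rfl⟩
  have hmem2 : ∀ {L}, L ∈ ((Finset.range k).filter (fun i => ¬ Even i)).image (oT 𝔊 M) →
      ∃ i, i < k ∧ ¬ Even i ∧ L = oT 𝔊 M i := by
    intro L hL
    obtain ⟨i, hi, rfl⟩ := Finset.mem_image.mp hL
    obtain ⟨hir, hie⟩ := Finset.mem_filter.mp hi
    exact ⟨i, Finset.mem_range.mp hir, hie, rfl⟩
  have hmemU : ∀ {L}, L ∈ ((Finset.range k).filter (fun i => Even i)).image (oT 𝔊 M) ∪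
      ((Finset.range k).filter (fun i => ¬ Even i)).image (oT 𝔊 M) →
      ∃ i, i < k ∧ L = oT 𝔊 M i := by
    intro L hL
    rcases Finset.mem_union.mp hL with h | h
    · obtain ⟨i, h1, _, h3⟩ := hmem1 h
      exact ⟨i, h1, h3⟩
    · obtain ⟨i, h1, _, h3⟩ := hmem2 h
      exact ⟨i, h1, h3⟩
  have hinj : ∀ {i j}, i < k → j < k → oT 𝔊 M i = oT 𝔊 M j → i = j := by
    intro i j hi hj he
    by_contra hij
    rcases Nat.lt_or_ge i j with h | h
    · obtain ⟨x, hx⟩ := hne i hi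
      exact Finset.disjoint_left.mp (oT_disj 𝔊 M h) hx (he ▸ hx)
    · have h' : j < i := by omega
      obtain ⟨x, hx⟩ := hne j hj
      exact Finset.disjoint_left.mp (oT_disj 𝔊 M h') hx (he ▸ hx)
  have hindep : ∀ {i j}, i < k → j < k → i ≠ j → (i % 2 = j % 2) →
      MutuallyIndependent (oT 𝔊 M i) (oT 𝔊 M j) := by
    intro i j hi hj hij hpar F hF F' hF'
    rcases Nat.lt_or_ge i j with h | h
    · exact no_cross_far 𝔊 M (by omega) hF hF'
    · rw [Set.inter_comm]
      exact no_cross_far 𝔊 M (by omega) hF' hF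
  refine ⟨?_, ?_, ?_, ?_, ?_, ?_⟩
  · rw [Finset.disjoint_left]
    intro L hL hL'
    obtain ⟨i, hi, hie, rfl⟩ := hmem1 hL
    obtain ⟨j, hj, hjo, hje⟩ := hmem2 hL'
    have := hinj hi hj hje
    rw [this] at hie
    exact hjo hie
  · intro L hL
    obtain ⟨i, hi, rfl⟩ := hmemU hL
    exact ⟨hne i hi, isLayer_oT 𝔊 M hgp h𝔊 hM hmaxle i⟩
  · intro L hL L' hL' hne'
    obtain ⟨i, hi, rfl⟩ := hmemU hL
    obtain ⟨j, hj, rfl⟩ := hmemU hL'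
    have hij : i ≠ j := fun h => hne' (by rw [h])
    rcases Nat.lt_or_ge i j with h | h
    · exact oT_disj 𝔊 M h
    · exact (oT_disj 𝔊 M (by omega)).symm
  · have heq : ((Finset.range k).filter (fun i => Even i)).image (oT 𝔊 M) ∪
        ((Finset.range k).filter (fun i => ¬ Even i)).image (oT 𝔊 M) =
        (Finset.range k).image (oT 𝔊 M) := by
      rw [← Finset.image_union, Finset.filter_union_filter_not_eq]
    rw [heq]
    ext x
    rw [oU_eq_biUnion]
    simp only [Finset.mem_biUnion, Finset.mem_image, Finset.mem_range, id]
    constructor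
    · rintro ⟨L, ⟨i, hi, rfl⟩, hx⟩
      refine ⟨i, ?_, hx⟩
      omega
    · rintro ⟨i, hi, hx⟩
      have hik : i < k := by
        by_contra h
        have : i = k := by omega
        rw [this, hk] at hx
        exact Finset.notMem_empty _ hx
      exact ⟨oT 𝔊 M i, ⟨i, hik, rfl⟩, hx⟩
  · intro L hL L' hL' hne'
    obtain ⟨i, hi, hie, rfl⟩ := hmem1 hL
    obtain ⟨j, hj, hje, rfl⟩ := hmem1 hL'
    have hij : i ≠ j := fun h => hne' (by rw [h])
    refine hindep hi hj hij ?_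
    rw [Nat.even_iff] at hie hje
    omega
  · intro L hL L' hL' hne'
    obtain ⟨i, hi, hie, rfl⟩ := hmem2 hL
    obtain ⟨j, hj, hje, rfl⟩ := hmem2 hL'
    have hij : i ≠ j := fun h => hne' (by rw [h])
    refine hindep hi hj hij ?_
    rw [Nat.not_even_iff] at hie hje
    omega

lemma main_induction (𝔉 : Finset Rect) (hgp : GenPos 𝔉) :
    ∀ n (𝔊 : Finset Rect), 𝔊 ⊆ 𝔉 → 𝔊.card ≤ n → ∃ P₁ P₂, GoodPart 𝔉 𝔊 P₁ P₂ := by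
  intro n
  induction n with
  | zero =>
      intro 𝔊 hsub hcard
      have h0 : 𝔊 = ∅ := Finset.card_eq_zero.mp (le_antisymm hcard (Nat.zero_le _))
      rw [h0]
      exact ⟨∅, ∅, good_empty⟩
  | succ n ih =>
      intro 𝔊 hsub hcard
      rcases Finset.eq_empty_or_nonempty 𝔊 with rfl | hGne
      · exact ⟨∅, ∅, good_empty⟩
      obtain ⟨M, hM, hmaxle⟩ := Finset.exists_max_image 𝔊 (fun F => F.r) hGne
      have hexe : ∃ i, oT 𝔊 M i = ∅ := exists_empty_oT 𝔊 M hM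
      classical
      set k := Nat.find hexe with hkdef
      have hk : oT 𝔊 M k = ∅ := Nat.find_spec hexe
      have hlt : ∀ j < k, (oT 𝔊 M j).Nonempty := fun j hj =>
        Finset.nonempty_iff_ne_empty.mpr (Nat.find_min hexe hj)
      have hGoodA := onion_good hgp hsub hM hmaxle hk hlt
      have hMU : M ∈ oU 𝔊 M k := by
        have h0 : M ∈ oU 𝔊 M 0 := by rw [oU_zero]; simp
        exact oU_mono 𝔊 M (Nat.zero_le k) h0
      have hrest_sub : 𝔊 \ oU 𝔊 M k ⊆ 𝔉 := (Finset.sdiff_subset).trans hsub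
      have hcard' : (𝔊 \ oU 𝔊 M k).card ≤ n := by
        have hss : 𝔊 \ oU 𝔊 M k ⊂ 𝔊 := by
          refine Finset.ssubset_iff_of_subset Finset.sdiff_subset |>.mpr ⟨M, hM, ?_⟩
          simp [hMU]
        have := Finset.card_lt_card hss
        omega
      obtain ⟨Q₁, Q₂, hGoodB⟩ := ih (𝔊 \ oU 𝔊 M k) hrest_sub hcard'
      have hdisj : Disjoint (oU 𝔊 M k) (𝔊 \ oU 𝔊 M k) := Finset.disjoint_sdiff
      have hind : ∀ a ∈ oU 𝔊 M k, ∀ b ∈ 𝔊 \ oU 𝔊 M k,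
          Rect.frame a ∩ Rect.frame b = ∅ := fun a ha b hb =>
        rest_no_cross 𝔊 M hM hk hb ha
      have hfinal := good_union hGoodA hGoodB hdisj hind
      have hcover : oU 𝔊 M k ∪ (𝔊 \ oU 𝔊 M k) = 𝔊 :=
        Finset.union_sdiff_of_subset (oU_subset_G 𝔊 M hM k)
      rw [hcover] at hfinal
      exact ⟨_, _, hfinal⟩

end Assembly


/-- Every family of frames in general position has a partition into layers which
splits into two subclasses each consisting of mutually independent layers. -/
theorem stmt16 (𝔉 : Finset Rect) (hgp : GenPos 𝔉) :
    ∃ P₁ P₂ : Finset (Finset Rect),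
      Disjoint P₁ P₂ ∧
      (∀ L ∈ P₁ ∪ P₂, L.Nonempty ∧ IsLayer 𝔉 L) ∧
      (∀ L ∈ P₁ ∪ P₂, ∀ L' ∈ P₁ ∪ P₂, L ≠ L' → Disjoint L L') ∧
      (P₁ ∪ P₂).biUnion id = 𝔉 ∧
      (∀ L ∈ P₁, ∀ L' ∈ P₁, L ≠ L' → MutuallyIndependent L L') ∧
      (∀ L ∈ P₂, ∀ L' ∈ P₂, L ≠ L' → MutuallyIndependent L L') := by
  obtain ⟨P₁, P₂, h1, h2, h3, h4, h5, h6⟩ :=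
    main_induction 𝔉 hgp 𝔉.card 𝔉 subset_rfl le_rfl
  exact ⟨P₁, P₂, h1, h2, h3, h4, h5, h6⟩
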